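/- The quotient graph of the discrete cactus is a tree: if G° is the graph whose vertices are the equivalence classes of V under d_Cac = 0 and whose edges join pairs of classes at cactus distance 1, then G° contains no nontrivial cycle. -/
import Mathlib


open SimpleGraph

/-- The maximum over all paths from `v` to `v'` of the minimum over vertices `a` on the
path of the graph distance `d_gr(ρ, a)`. -/
noncomputable def cacMaxMin {V : Type*} (G : SimpleGraph V) (ρ v v' : V) : ℕ :=
  sSup {m : ℕ | ∃ w : G.Walk v v', ∀ a ∈ w.support, m ≤ G.dist ρ a}

/-- The cactus pseudo-distance of the pointed graph `(G, ρ)`. -/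
noncomputable def dCac {V : Type*} (G : SimpleGraph V) (ρ v v' : V) : ℕ :=
  G.dist ρ v + G.dist ρ v' - 2 * cacMaxMin G ρ v v'

section Aux

variable {V : Type*} {G : SimpleGraph V} {ρ : V}

lemma cacSet_nonempty (hG : G.Connected) (v v' : V) :
    {m : ℕ | ∃ w : G.Walk v v', ∀ a ∈ w.support, m ≤ G.dist ρ a}.Nonempty :=
  ⟨0, (hG.preconnected v v').some, fun _ _ => Nat.zero_le _⟩

lemma cacSet_bdd (v v' : V) :
    BddAbove {m : ℕ | ∃ w : G.Walk v v', ∀ a ∈ w.support, m ≤ G.dist ρ a} :=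
  ⟨G.dist ρ v, fun _ ⟨w, hw⟩ => hw v w.start_mem_support⟩

lemma cacMaxMin_le_left (hG : G.Connected) (v v' : V) :
    cacMaxMin G ρ v v' ≤ G.dist ρ v :=
  csSup_le (cacSet_nonempty hG v v') fun _ ⟨w, hw⟩ => hw v w.start_mem_support

lemma cacMaxMin_le_right (hG : G.Connected) (v v' : V) :
    cacMaxMin G ρ v v' ≤ G.dist ρ v' :=
  csSup_le (cacSet_nonempty hG v v') fun _ ⟨w, hw⟩ => hw v' w.end_mem_support

lemma le_cacMaxMin {v v' : V} {m : ℕ} (w : G.Walk v v')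
    (hw : ∀ a ∈ w.support, m ≤ G.dist ρ a) : m ≤ cacMaxMin G ρ v v' :=
  le_csSup (cacSet_bdd v v') ⟨w, hw⟩

lemma cacMaxMin_witness (hG : G.Connected) (v v' : V) :
    ∃ w : G.Walk v v', ∀ a ∈ w.support, cacMaxMin G ρ v v' ≤ G.dist ρ a :=
  Nat.sSup_mem (cacSet_nonempty hG v v') (cacSet_bdd v v')

/-- Extract information from `dCac = 0`. -/
lemma dCac_zero_spec (hG : G.Connected) {v v' : V} (h : dCac G ρ v v' = 0) :
    G.dist ρ v = G.dist ρ v' ∧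
      ∃ w : G.Walk v v', ∀ a ∈ w.support, G.dist ρ v ≤ G.dist ρ a := by
  have h1 := cacMaxMin_le_left (ρ := ρ) hG v v'
  have h2 := cacMaxMin_le_right (ρ := ρ) hG v v'
  unfold dCac at h
  have hd : G.dist ρ v = cacMaxMin G ρ v v' ∧ G.dist ρ v' = cacMaxMin G ρ v v' := by omega
  obtain ⟨w, hw⟩ := cacMaxMin_witness (ρ := ρ) hG v v'
  exact ⟨hd.1.trans hd.2.symm, w, fun a ha => hd.1 ▸ hw a ha⟩

/-- Extract information from `dCac = 1`. -/
lemma dCac_one_spec (hG : G.Connected) {v v' : V} (h : dCac G ρ v v' = 1) :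
    ∃ (m : ℕ) (w : G.Walk v v'), m ≤ G.dist ρ v ∧ m ≤ G.dist ρ v' ∧
      G.dist ρ v + G.dist ρ v' = 2 * m + 1 ∧ ∀ a ∈ w.support, m ≤ G.dist ρ a := by
  have h1 := cacMaxMin_le_left (ρ := ρ) hG v v'
  have h2 := cacMaxMin_le_right (ρ := ρ) hG v v'
  unfold dCac at h
  obtain ⟨w, hw⟩ := cacMaxMin_witness (ρ := ρ) hG v v'
  exact ⟨cacMaxMin G ρ v v', w, h1, h2, by omega, hw⟩

/-- Sufficient condition for `dCac = 0`. -/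
lemma dCac_eq_zero {v v' : V} {m : ℕ} (w : G.Walk v v')
    (hw : ∀ a ∈ w.support, m ≤ G.dist ρ a)
    (hm : G.dist ρ v + G.dist ρ v' ≤ 2 * m) : dCac G ρ v v' = 0 := by
  have := le_cacMaxMin (ρ := ρ) w hw
  unfold dCac
  omega

lemma walk_bound_append {u v w : V} {m : ℕ} {p : G.Walk u v} {q : G.Walk v w}
    (hp : ∀ a ∈ p.support, m ≤ G.dist ρ a) (hq : ∀ a ∈ q.support, m ≤ G.dist ρ a) :
    ∀ a ∈ (p.append q).support, m ≤ G.dist ρ a := by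
  intro a ha
  rw [Walk.mem_support_append_iff] at ha
  rcases ha with h | h
  exacts [hp a h, hq a h]

lemma walk_bound_reverse {u v : V} {m : ℕ} {p : G.Walk u v}
    (hp : ∀ a ∈ p.support, m ≤ G.dist ρ a) :
    ∀ a ∈ p.reverse.support, m ≤ G.dist ρ a := by
  intro a ha
  rw [Walk.support_reverse, List.mem_reverse] at ha
  exact hp a ha

lemma walk_bound_mono {u v : V} {m m' : ℕ} {p : G.Walk u v} (hm : m' ≤ m)
    (hp : ∀ a ∈ p.support, m ≤ G.dist ρ a) :
    ∀ a ∈ p.support, m' ≤ G.dist ρ a :=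
  fun a ha => le_trans hm (hp a ha)

end Aux

/-- The graph  on the quotient `Cac(G) = V / {d_Cac = 0}`, whose edges are the pairs
of classes at cactus distance 1, contains no nontrivial cycle (it is a tree). -/
theorem stmt5 {V : Type*} [Fintype V] (G : SimpleGraph V) (hG : G.Connected) (ρ : V) :
    ¬ ∃ (n : ℕ) (x : ℕ → V), 3 ≤ n ∧
      dCac G ρ (x 0) (x n) = 0 ∧
      (∀ i < n, dCac G ρ (x i) (x (i + 1)) = 1) ∧
      (∀ i j, i < j → j < n → dCac G ρ (x i) (x j) ≠ 0) := by
  rintro ⟨n, x, hn, h0, h1, hne⟩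
  obtain ⟨hd0n, w0n, hw0n⟩ := dCac_zero_spec hG h0
  obtain ⟨i, hi, hmaxaux⟩ := Finset.exists_max_image (Finset.range (n + 1))
    (fun j => G.dist ρ (x j)) ⟨0, by simp⟩
  have hmax : ∀ j, j ≤ n → G.dist ρ (x j) ≤ G.dist ρ (x i) := by
    intro j hj
    exact hmaxaux j (Finset.mem_range.mpr (by omega))
  rw [Finset.mem_range] at hi
  by_cases hc : G.dist ρ (x 0) = G.dist ρ (x i)
  · -- the maximum height is attained at x 0 (and x n)
    have h10 := h1 0 (by omega)
    rw [show (0 + 1 : ℕ) = 1 from rfl] at h10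
    obtain ⟨m1, w1, hm1a, hm1b, hs1, hw1⟩ := dCac_one_spec hG h10
    have h1n' := h1 (n - 1) (by omega)
    have e : n - 1 + 1 = n := by omega
    rw [e] at h1n'
    obtain ⟨m2, w2, hm2a, hm2b, hs2, hw2⟩ := dCac_one_spec hG h1n'
    have hb1 : G.dist ρ (x 1) ≤ G.dist ρ (x i) := hmax 1 (by omega)
    have hb2 : G.dist ρ (x (n - 1)) ≤ G.dist ρ (x i) := hmax (n - 1) (by omega)
    set M := G.dist ρ (x i) with hM
    have hkey : m1 = G.dist ρ (x 1) ∧ m2 = G.dist ρ (x (n - 1)) ∧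
        G.dist ρ (x 1) + 1 = M ∧ G.dist ρ (x (n - 1)) + 1 = M := by omega
    apply hne 1 (n - 1) (by omega) (by omega)
    refine dCac_eq_zero (m := M - 1) ((w1.reverse.append w0n).append w2.reverse) ?_ (by omega)
    refine walk_bound_append (walk_bound_append (walk_bound_reverse ?_) ?_)
      (walk_bound_reverse ?_)
    · exact walk_bound_mono (by omega) hw1
    · exact walk_bound_mono (by omega) hw0n
    · exact walk_bound_mono (by omega) hw2
  · -- the maximum is attained at an interior index i, 1 ≤ i ≤ n - 1
    have hlt : G.dist ρ (x 0) < G.dist ρ (x i) :=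
      lt_of_le_of_ne (hmax 0 (by omega)) hc
    have hi0 : i ≠ 0 := by rintro rfl; exact hc rfl
    have hin : i ≠ n := by
      rintro rfl
      rw [← hd0n] at hlt
      exact lt_irrefl _ hlt
    obtain ⟨j, rfl⟩ : ∃ j, i = j + 1 := ⟨i - 1, by omega⟩
    obtain ⟨m1, w1, hm1a, hm1b, hs1, hw1⟩ := dCac_one_spec hG (h1 j (by omega))
    have h1j := h1 (j + 1) (by omega)
    rw [show j + 1 + 1 = j + 2 from rfl] at h1j
    obtain ⟨m2, w2, hm2a, hm2b, hs2, hw2⟩ := dCac_one_spec hG h1j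
    have hb1 : G.dist ρ (x j) ≤ G.dist ρ (x (j + 1)) := hmax j (by omega)
    have hb2 : G.dist ρ (x (j + 2)) ≤ G.dist ρ (x (j + 1)) := hmax (j + 2) (by omega)
    set M := G.dist ρ (x (j + 1)) with hM
    have hkey : m1 = G.dist ρ (x j) ∧ m2 = G.dist ρ (x (j + 2)) ∧
        G.dist ρ (x j) + 1 = M ∧ G.dist ρ (x (j + 2)) + 1 = M := by omega
    have hWb : ∀ a ∈ (w1.append w2).support, M - 1 ≤ G.dist ρ a :=
      walk_bound_append (walk_bound_mono (by omega) hw1) (walk_bound_mono (by omega) hw2)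
    by_cases hj2 : j + 2 < n
    · exact hne j (j + 2) (by omega) hj2
        (dCac_eq_zero (w1.append w2) hWb (by omega))
    · -- j + 2 = n : go around through x n ≡ x 0
      have e : j + 2 = n := by omega
      subst e
      apply hne 0 j (by omega) (by omega)
      refine dCac_eq_zero (m := M - 1) ((w1.append w2).append w0n.reverse).reverse
        (walk_bound_reverse (walk_bound_append hWb (walk_bound_reverse ?_))) (by omega)
      exact walk_bound_mono (by omega) hw0n
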